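/- arXiv:1601.03038 — 4 statements merged into one kernel-verified Lean document; each statement's English description precedes it below -/
import Mathlib

section
/- (Riemann–Roch theorem for graphs, Baker–Norine) Let G be a finite connected loopless multigraph with n vertices and m edges, and let κ be the canonical divisor defined by κ(v) = deg(v) − 2 for all vertices v, so that deg(κ) = 2(m − n). Then every divisor f on G satisfies ρ(f) − ρ(κ − f) = deg(f) − g + 1, where g = m − n + 1 is the genus of G. -/
/-- A finite loopless multigraph on vertex set `V`, given by its symmetric
edge-multiplicity function `e`. -/
structure Multigraph (V : Type*) [Fintype V] [DecidableEq V] where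
  e : V → V → ℕ
  symm : ∀ u v, e u v = e v u
  loopless : ∀ v, e v v = 0

namespace Multigraph

variable {V : Type*} [Fintype V] [DecidableEq V]

/-- The degree of a vertex of a multigraph. -/
def vdeg (G : Multigraph V) (v : V) : ℕ := ∑ u, G.e v u

/-- The number of edges of a multigraph. -/
def edgeCount (G : Multigraph V) : ℕ := (∑ u, ∑ v, G.e u v) / 2

/-- The underlying simple graph (adjacency) of a multigraph. -/
def toSimple (G : Multigraph V) : SimpleGraph V where
  Adj u v := G.e u v ≠ 0
  symm := ⟨by intro u v h; rwa [G.symm]⟩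
  loopless := ⟨by intro v h; exact h (G.loopless v)⟩

/-- A multigraph is connected if its underlying simple graph is. -/
def Connected (G : Multigraph V) : Prop := G.toSimple.Connected

/-- The degree of a divisor `f : V → ℤ`. -/
def degree (f : V → ℤ) : ℤ := ∑ v, f v

/-- A divisor is effective if all its values are nonnegative. -/
def Effective (f : V → ℤ) : Prop := ∀ v, 0 ≤ f v

/-- The divisor `x · Δ_G`, where `Δ_G` is the Laplacian matrix of `G`. -/
def lapApply (G : Multigraph V) (x : V → ℤ) : V → ℤ :=
  fun v => x v * (G.vdeg v : ℤ) - ∑ u, x u * (G.e u v : ℤ)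

/-- Linear equivalence of divisors: `g = f + x Δ_G` for some `x : V → ℤ`. -/
def LinEquiv (G : Multigraph V) (f g : V → ℤ) : Prop :=
  ∃ x : V → ℤ, g = f + G.lapApply x

/-- A divisor is L-effective if it is linearly equivalent to an effective divisor. -/
def LEffective (G : Multigraph V) (f : V → ℤ) : Prop :=
  ∃ g : V → ℤ, G.LinEquiv f g ∧ Effective g

/-- The Baker–Norine rank of a divisor: `-1` if `f` is not L-effective, and
otherwise the largest `r ≥ 0` such that `f - λ` is L-effective for every
effective divisor `λ` of degree `r`. -/
noncomputable def rank (G : Multigraph V) (f : V → ℤ) : ℤ :=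
  sSup ({-1} ∪ {r : ℤ | 0 ≤ r ∧
    ∀ l : V → ℤ, Effective l → degree l = r → G.LEffective (f - l)})

/-- The divisor `ε_v`. -/
def epsDiv (v : V) : V → ℤ := fun u => if u = v then 1 else 0

/-- A tree: a connected acyclic (multi)graph. -/
def IsTree (G : Multigraph V) : Prop :=
  G.toSimple.IsTree ∧ ∀ u v, G.e u v ≤ 1

/-- A cycle graph: connected, and every vertex has degree 2. -/
def IsCycleGraph (G : Multigraph V) : Prop :=
  G.Connected ∧ ∀ v, G.vdeg v = 2

/-- An edge: two vertices joined by a single edge. -/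
def IsEdgeGraph (G : Multigraph V) : Prop :=
  Fintype.card V = 2 ∧ G.Connected ∧ ∀ u v, G.e u v ≤ 1

/-- A good divisor (on a cycle): degree `0` and linearly equivalent to `0`. -/
def Good (G : Multigraph V) (f : V → ℤ) : Prop :=
  degree f = 0 ∧ G.LinEquiv f 0

/-- A bad divisor (on a cycle): degree `0` and not linearly equivalent to `0`. -/
def Bad (G : Multigraph V) (f : V → ℤ) : Prop :=
  degree f = 0 ∧ ¬ G.LinEquiv f 0

/-- The induced sub-multigraph on a finite set `S` of vertices. -/
def induce (G : Multigraph V) (S : Finset V) : Multigraph {x // x ∈ S} where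
  e a b := G.e a.1 b.1
  symm := fun a b => G.symm a.1 b.1
  loopless := fun a => G.loopless a.1

/-- `v` decomposes the induced subgraph of `G` on `S` into the induced
subgraphs on `V1` and `U`: they cover `S`, meet exactly in `v`, are both
connected, and there is no edge between `V1 \ {v}` and `U \ {v}`. -/
def DecompOn (G : Multigraph V) (S : Finset V) (v : V) (V1 U : Finset V) : Prop :=
  V1 ∪ U = S ∧ V1 ∩ U = {v} ∧
  (G.induce V1).Connected ∧ (G.induce U).Connected ∧
  ∀ a ∈ V1, ∀ b ∈ U, a ≠ v → b ≠ v → G.e a b = 0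

/-- `v` decomposes `G` into the induced subgraphs on `V1` and `U`. -/
def Decomp (G : Multigraph V) (v : V) (V1 U : Finset V) : Prop :=
  G.DecompOn Finset.univ v V1 U

/-- The contraction `f_{G/H}` of a divisor `f`, where `H = G(U)` and
`G/H = G(V1)`, the cut vertex being `v`. -/
def contractDiv (f : V → ℤ) (v : V) (V1 U : Finset V) : {x // x ∈ V1} → ℤ :=
  fun u => if u.1 = v then ∑ w ∈ U, f w else f u.1

/-- The zero `f_{N(H)}` of a divisor `f`, where `H = G(U)`, the cut vertex
being `v`. -/
def zeroDiv (f : V → ℤ) (v : V) (U : Finset V) : {x // x ∈ U} → ℤ :=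
  fun u => if u.1 = v then - ∑ w ∈ U.erase v, f w else f u.1

/-- `ε_v` as a divisor on an induced subgraph. -/
def epsDivOn (S : Finset V) (v : V) : {x // x ∈ S} → ℤ :=
  fun u => if u.1 = v then 1 else 0

/-- A simple cycle of `G`, given as a sub-multigraph (an edge-multiplicity
function bounded by that of `G`) which is connected on its support and in
which every vertex of its (nonempty) support has degree 2. -/
def IsCycleSubgraph (G : Multigraph V) (h : V → V → ℕ) : Prop :=
  (∀ u v, h u v ≤ G.e u v) ∧ (∀ u v, h u v = h v u) ∧
  (∀ v, (∑ u, h v u = 0) ∨ (∑ u, h v u = 2)) ∧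
  (∃ v, ∑ u, h v u ≠ 0) ∧
  (∀ v w, (∑ u, h v u ≠ 0) → (∑ u, h w u ≠ 0) →
    Relation.ReflTransGen (fun a b => h a b ≠ 0) v w)

/-- The vertex support of a sub-multigraph. -/
def cycleSupport (h : V → V → ℕ) : Finset V :=
  Finset.univ.filter (fun v => ∑ u, h v u ≠ 0)

/-- A cactus: a connected multigraph in which any two distinct simple cycles
have at most one vertex in common (in particular every edge has multiplicity
at most 2, since parallel edges form 2-cycles). -/
def IsCactus (G : Multigraph V) : Prop :=
  G.Connected ∧ (∀ u v, G.e u v ≤ 2) ∧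
  ∀ h₁ h₂ : V → V → ℕ, G.IsCycleSubgraph h₁ → G.IsCycleSubgraph h₂ → h₁ ≠ h₂ →
    (cycleSupport h₁ ∩ cycleSupport h₂).card ≤ 1

/-- One step of a block elimination scheme: `G(S')` is obtained from `G(S)`
by contracting a free block (an edge or a cycle) `G(U)` at the vertex `v`. -/
def BlockStep (G : Multigraph V) (S S' : Finset V) : Prop :=
  ∃ (v : V) (U : Finset V), G.DecompOn S v S' U ∧
    ((G.induce U).IsEdgeGraph ∨ (G.induce U).IsCycleGraph)

/-- A block elimination scheme: a sequence of contractions of free blocks,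
starting from `G` and ending at a single vertex. -/
def HasBlockEliminationScheme (G : Multigraph V) : Prop :=
  ∃ (k : ℕ) (S : ℕ → Finset V), S 0 = Finset.univ ∧ (S k).card = 1 ∧
    ∀ i < k, G.BlockStep (S i) (S (i + 1))

end Multigraph

open Multigraph

variable {V : Type*} [Fintype V] [DecidableEq V]

namespace RR
open Multigraph Finset

set_option linter.unusedSectionVars false

variable {V : Type*} [Fintype V] [DecidableEq V] (G : Multigraph V)

lemma e_symm_int (u v : V) : (G.e u v : ℤ) = (G.e v u : ℤ) := by
  exact congrArg _ (G.symm u v)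

lemma lap_eq (x : V → ℤ) (v : V) :
    G.lapApply x v = ∑ u, (x v - x u) * (G.e u v : ℤ) := by
  unfold Multigraph.lapApply Multigraph.vdeg
  push_cast
  rw [Finset.mul_sum, ← Finset.sum_sub_distrib]
  refine Finset.sum_congr rfl fun u _ => ?_
  rw [e_symm_int G v u]; ring

lemma sum_antisym (F : V → V → ℤ) (hF : ∀ u v, F u v = - F v u) :
    ∑ v, ∑ u, F u v = 0 := by
  have h1 : (∑ v, ∑ u, F u v) = ∑ v, ∑ u, F v u := Finset.sum_comm
  have h2 : (∑ v, ∑ u, F v u) = ∑ v, ∑ u, -F u v :=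
    Finset.sum_congr rfl fun v _ => Finset.sum_congr rfl fun u _ => (hF v u) ▸ rfl
  have h3 : (∑ v, ∑ u, -F u v) = - ∑ v, ∑ u, F u v := by
    simp [Finset.sum_neg_distrib]
  omega

lemma degree_lap (x : V → ℤ) : degree (G.lapApply x) = 0 := by
  have h : degree (G.lapApply x) = ∑ v, ∑ u, (x v - x u) * (G.e u v : ℤ) :=
    Finset.sum_congr rfl fun v _ => lap_eq G x v
  rw [h]
  refine sum_antisym _ fun u v => ?_
  rw [e_symm_int G u v]; ring

lemma lap_symm (x y : V → ℤ) :
    ∑ v, x v * G.lapApply y v = ∑ v, y v * G.lapApply x v := by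
  have key : ∑ v, ∑ u, (y v * x u - x v * y u) * (G.e u v : ℤ) = 0 := by
    refine sum_antisym _ fun u v => ?_
    rw [e_symm_int G u v]; ring
  have expand : ∑ v, (x v * G.lapApply y v - y v * G.lapApply x v)
      = ∑ v, ∑ u, (y v * x u - x v * y u) * (G.e u v : ℤ) := by
    refine Finset.sum_congr rfl fun v _ => ?_
    rw [lap_eq, lap_eq, Finset.mul_sum, Finset.mul_sum, ← Finset.sum_sub_distrib]
    exact Finset.sum_congr rfl fun u _ => by ring
  rw [Finset.sum_sub_distrib] at expand
  omega

lemma lap_zero : G.lapApply 0 = 0 := by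
  funext v; rw [lap_eq]; simp

lemma lap_add (x y : V → ℤ) : G.lapApply (x + y) = G.lapApply x + G.lapApply y := by
  funext v; simp only [Pi.add_apply, lap_eq, ← Finset.sum_add_distrib]
  exact Finset.sum_congr rfl fun u _ => by ring

lemma lap_neg (x : V → ℤ) : G.lapApply (-x) = - G.lapApply x := by
  funext v; simp only [Pi.neg_apply, lap_eq, ← Finset.sum_neg_distrib]
  exact Finset.sum_congr rfl fun u _ => by ring

lemma lap_smul (t : ℤ) (x : V → ℤ) : G.lapApply (t • x) = t • G.lapApply x := by
  funext v; simp only [Pi.smul_apply, smul_eq_mul, lap_eq, Finset.mul_sum]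
  exact Finset.sum_congr rfl fun u _ => by ring

lemma linEquiv_refl (f : V → ℤ) : G.LinEquiv f f :=
  ⟨0, by rw [lap_zero]; simp⟩

lemma linEquiv_symm {G : Multigraph V} {f g : V → ℤ} (h : G.LinEquiv f g) : G.LinEquiv g f := by
  obtain ⟨x, hx⟩ := h
  exact ⟨-x, by rw [lap_neg, hx]; abel⟩

lemma linEquiv_trans {G : Multigraph V} {f g h : V → ℤ}
    (h1 : G.LinEquiv f g) (h2 : G.LinEquiv g h) : G.LinEquiv f h := by
  obtain ⟨x, hx⟩ := h1; obtain ⟨y, hy⟩ := h2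
  exact ⟨x + y, by rw [lap_add, hy, hx]; abel⟩

lemma degree_add (f g : V → ℤ) : degree (f + g) = degree f + degree g := by
  unfold Multigraph.degree; rw [← Finset.sum_add_distrib]; rfl

lemma degree_sub (f g : V → ℤ) : degree (f - g) = degree f - degree g := by
  unfold Multigraph.degree; rw [← Finset.sum_sub_distrib]; rfl

lemma linEquiv_degree {G : Multigraph V} {f g : V → ℤ} (h : G.LinEquiv f g) :
    degree g = degree f := by
  obtain ⟨x, hx⟩ := h
  rw [hx, degree_add, degree_lap, add_zero]

lemma linEquiv_sub_left {G : Multigraph V} {f g : V → ℤ} (c : V → ℤ) (h : G.LinEquiv f g) :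
    G.LinEquiv (c - f) (c - g) := by
  obtain ⟨x, hx⟩ := h
  exact ⟨-x, by rw [lap_neg, hx]; abel⟩

lemma linEquiv_add_right {G : Multigraph V} {f g : V → ℤ} (c : V → ℤ) (h : G.LinEquiv f g) :
    G.LinEquiv (f + c) (g + c) := by
  obtain ⟨x, hx⟩ := h
  exact ⟨x, by rw [hx]; abel⟩

lemma lEffective_of_effective {G : Multigraph V} {f : V → ℤ} (h : Effective f) :
    G.LEffective f := ⟨f, linEquiv_refl G f, h⟩

lemma lEffective_congr {G : Multigraph V} {f g : V → ℤ} (h : G.LinEquiv f g) :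
    G.LEffective f ↔ G.LEffective g := by
  constructor
  · rintro ⟨e, he, heff⟩; exact ⟨e, linEquiv_trans (linEquiv_symm h) he, heff⟩
  · rintro ⟨e, he, heff⟩; exact ⟨e, linEquiv_trans h he, heff⟩

lemma lEffective_add {G : Multigraph V} {f g : V → ℤ} (hf : G.LEffective f)
    (hg : G.LEffective g) : G.LEffective (f + g) := by
  obtain ⟨a, ⟨x, hx⟩, ha⟩ := hf; obtain ⟨b, ⟨y, hy⟩, hb⟩ := hg
  refine ⟨a + b, ⟨x + y, ?_⟩, fun v => add_nonneg (ha v) (hb v)⟩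
  rw [lap_add, hx, hy]; abel

lemma lEffective_of_le {G : Multigraph V} {f g : V → ℤ} (hf : G.LEffective f)
    (h : ∀ v, f v ≤ g v) : G.LEffective g := by
  have : g = f + (g - f) := by abel
  rw [this]
  exact lEffective_add hf (lEffective_of_effective (fun v => by
    have := h v; simp only [Pi.sub_apply]; omega))

lemma lEffective_degree_nonneg {G : Multigraph V} {f : V → ℤ} (h : G.LEffective f) :
    0 ≤ degree f := by
  obtain ⟨e, he, heff⟩ := h
  rw [← linEquiv_degree he]
  exact Finset.sum_nonneg fun v _ => heff v

end RR
namespace RR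
open Multigraph Finset

set_option linter.unusedSectionVars false

variable {V : Type*} [Fintype V] [DecidableEq V] (G : Multigraph V)

/-- The Laplacian over ℚ as a linear map. -/
noncomputable def lapQ : (V → ℚ) →ₗ[ℚ] (V → ℚ) where
  toFun x := fun v => ∑ u, (x v - x u) * (G.e u v : ℚ)
  map_add' x y := by
    funext v
    simp only [Pi.add_apply, ← Finset.sum_add_distrib]
    exact Finset.sum_congr rfl fun u _ => by ring
  map_smul' c x := by
    funext v
    simp only [Pi.smul_apply, smul_eq_mul, RingHom.id_apply, Finset.mul_sum]
    exact Finset.sum_congr rfl fun u _ => by ring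

lemma lapQ_apply (x : V → ℚ) (v : V) :
    lapQ G x v = ∑ u, (x v - x u) * (G.e u v : ℚ) := rfl

/-- Maximum principle: kernel of the Laplacian of a connected graph is constants. -/
lemma lapQ_ker_const (hG : G.Connected) {x : V → ℚ} (hx : lapQ G x = 0) (u v : V) :
    x u = x v := by
  haveI : Nonempty V := hG.nonempty
  obtain ⟨v0, -, hv0⟩ := Finset.exists_max_image Finset.univ x ⟨Classical.arbitrary V, mem_univ _⟩
  have hmax : ∀ w, x w ≤ x v0 := fun w => hv0 w (mem_univ w)
  -- every vertex adjacent to a maximizer is a maximizer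
  have step : ∀ a b : V, x a = x v0 → G.toSimple.Adj a b → x b = x v0 := by
    intro a b ha hab
    have h0 : lapQ G x a = 0 := congrFun hx a
    rw [lapQ_apply] at h0
    have hnn : ∀ u ∈ Finset.univ, (0:ℚ) ≤ (x a - x u) * (G.e u a : ℚ) := by
      intro u _
      have := hmax u
      have : 0 ≤ x a - x u := by rw [ha]; linarith
      positivity
    have := (Finset.sum_eq_zero_iff_of_nonneg hnn).mp h0 b (mem_univ b)
    have heb : (G.e b a : ℚ) ≠ 0 := by
      have : G.e b a ≠ 0 := fun h => hab (by rw [G.symm] at h; exact h)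
      exact_mod_cast this
    have : x a - x b = 0 := by
      rcases mul_eq_zero.mp this with h | h
      · exact h
      · exact absurd h heb
    rw [← ha]; linarith
  have reach : ∀ a b : V, G.toSimple.Reachable a b → x a = x v0 → x b = x v0 := by
    intro a b hr
    obtain ⟨p⟩ := hr
    induction p with
    | nil => exact id
    | cons hadj p ih => exact fun ha => ih (step _ _ ha hadj)
  have h1 := reach v0 u (hG.preconnected v0 u) rfl
  have h2 := reach v0 v (hG.preconnected v0 v) rfl
  rw [h1, h2]

end RR
namespace RR
open Multigraph Finset Module

set_option linter.unusedSectionVars false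

variable {V : Type*} [Fintype V] [DecidableEq V] (G : Multigraph V)

lemma sum_antisymQ (F : V → V → ℚ) (hF : ∀ u v, F u v = - F v u) :
    ∑ v, ∑ u, F u v = 0 := by
  have h1 : (∑ v, ∑ u, F u v) = ∑ v, ∑ u, F v u := Finset.sum_comm
  have h2 : (∑ v, ∑ u, F v u) = ∑ v, ∑ u, -F u v :=
    Finset.sum_congr rfl fun v _ => Finset.sum_congr rfl fun u _ => (hF v u) ▸ rfl
  have h3 : (∑ v, ∑ u, -F u v) = - ∑ v, ∑ u, F u v := by
    simp [Finset.sum_neg_distrib]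
  linarith

lemma degQ_lapQ (x : V → ℚ) : ∑ v, lapQ G x v = 0 := by
  have h : (∑ v, lapQ G x v) = ∑ v, ∑ u, (x v - x u) * (G.e u v : ℚ) := rfl
  rw [h]
  refine sum_antisymQ _ fun u v => ?_
  have : (G.e v u : ℚ) = (G.e u v : ℚ) := congrArg _ (G.symm v u)
  rw [this]; ring

/-- The degree functional over ℚ. -/
noncomputable def degQ : (V → ℚ) →ₗ[ℚ] ℚ where
  toFun x := ∑ v, x v
  map_add' x y := by simp [Finset.sum_add_distrib]
  map_smul' c x := by simp [Finset.mul_sum]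

lemma lapQ_surj (hG : G.Connected) (c : V → ℚ) (hc : ∑ v, c v = 0) :
    ∃ x : V → ℚ, lapQ G x = c := by
  haveI : Nonempty V := hG.nonempty
  classical
  -- kernel of lapQ is the span of the constant function 1
  have hker : LinearMap.ker (lapQ G) = Submodule.span ℚ {(fun _ => 1 : V → ℚ)} := by
    apply le_antisymm
    · intro x hx
      have hx' : lapQ G x = 0 := hx
      have hconst : ∀ u v : V, x u = x v := lapQ_ker_const G hG hx'
      rw [Submodule.mem_span_singleton]
      refine ⟨x (Classical.arbitrary V), ?_⟩
      funext v
      simp [hconst v (Classical.arbitrary V)]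
    · rw [Submodule.span_le]
      intro y hy
      simp only [Set.mem_singleton_iff] at hy
      subst hy
      simp only [SetLike.mem_coe, LinearMap.mem_ker]
      funext v
      rw [lapQ_apply]
      simp
  have hone : (fun _ => (1:ℚ) : V → ℚ) ≠ 0 := by
    intro h
    have := congrFun h (Classical.arbitrary V)
    simp at this
  have hkerrank : finrank ℚ (LinearMap.ker (lapQ G)) = 1 := by
    rw [hker]
    exact finrank_span_singleton hone
  have hdim : finrank ℚ (V → ℚ) = Fintype.card V := Module.finrank_pi ℚ
  have hrn := LinearMap.finrank_range_add_finrank_ker (lapQ G)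
  -- degQ has full range
  have hdegsurj : Function.Surjective (degQ (V := V)) := by
    intro a
    refine ⟨fun v => if v = Classical.arbitrary V then a else 0, ?_⟩
    show (∑ v, _) = a
    simp [Finset.sum_ite_eq']
  have hdegrange : LinearMap.range (degQ (V := V)) = ⊤ :=
    LinearMap.range_eq_top.mpr hdegsurj
  have hdegker : finrank ℚ (LinearMap.ker (degQ (V := V))) + 1 = Fintype.card V := by
    have := LinearMap.finrank_range_add_finrank_ker (degQ (V := V))
    rw [hdegrange, finrank_top, hdim] at this
    simpa [add_comm] using this
  have hle : LinearMap.range (lapQ G) ≤ LinearMap.ker (degQ (V := V)) := by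
    rintro y ⟨x, rfl⟩
    exact degQ_lapQ G x
  have heq : LinearMap.range (lapQ G) = LinearMap.ker (degQ (V := V)) := by
    apply Submodule.eq_of_le_of_finrank_le hle
    rw [hkerrank, hdim] at hrn
    omega
  have hcmem : c ∈ LinearMap.ker (degQ (V := V)) := hc
  rw [← heq] at hcmem
  exact hcmem

/-- Existence of a positive integer weight `w` with constant positive Laplacian off `q`. -/
lemma exists_weight (hG : G.Connected) (q : V) :
    ∃ (w : V → ℤ) (k : ℤ), 1 ≤ k ∧ w q = 0 ∧ (∀ v, v ≠ q → G.lapApply w v = k) ∧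
      (∀ v, 0 ≤ w v) := by
  haveI : Nonempty V := hG.nonempty
  classical
  set n : ℕ := Fintype.card V with hn
  set c : V → ℚ := fun v => if v = q then 1 - (n : ℚ) else 1 with hcdef
  have hc : ∑ v, c v = 0 := by
    have h1 : ∑ v, c v = ∑ v, ((if v = q then -(n:ℚ) else 0) + 1) := by
      refine Finset.sum_congr rfl fun v _ => ?_
      by_cases h : v = q <;> simp [hcdef, h] <;> ring
    rw [h1, Finset.sum_add_distrib]
    simp [Finset.sum_ite_eq', hn, Finset.card_univ]
  obtain ⟨x, hx⟩ := lapQ_surj G hG c hc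
  set d : ℕ := ∏ v, (x v).den with hd
  have hdpos : 0 < d := Finset.prod_pos fun v _ => (x v).pos
  have hint : ∀ v, (((x v).num * ((d : ℤ) / ((x v).den : ℤ)) : ℤ) : ℚ) = x v * d := by
    intro v
    have hdvd : ((x v).den : ℤ) ∣ (d : ℤ) :=
      Int.natCast_dvd_natCast.mpr (Finset.dvd_prod_of_mem _ (mem_univ v))
    have hbden : ((x v).den : ℚ) ≠ 0 := Nat.cast_ne_zero.mpr (x v).den_nz
    apply mul_right_cancel₀ hbden
    have hdiv : ((d:ℤ) / ((x v).den:ℤ)) * ((x v).den:ℤ) = (d:ℤ) := Int.ediv_mul_cancel hdvd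
    calc (((x v).num * ((d:ℤ)/((x v).den:ℤ)) : ℤ) : ℚ) * ((x v).den : ℚ)
        = (((x v).num * (((d:ℤ)/((x v).den:ℤ)) * ((x v).den:ℤ)) : ℤ) : ℚ) := by push_cast; ring
      _ = (((x v).num * (d:ℤ) : ℤ) : ℚ) := by rw [hdiv]
      _ = ((x v).num : ℚ) * (d:ℚ) := by push_cast; ring
      _ = (x v * ((x v).den:ℚ)) * d := by rw [Rat.mul_den_eq_num]
      _ = x v * (d:ℚ) * ((x v).den:ℚ) := by ring
  set w0 : V → ℤ := fun v => (x v).num * ((d : ℤ) / ((x v).den : ℤ)) with hw0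
  have hw0cast : ∀ v, ((w0 v : ℤ) : ℚ) = x v * d := fun v => hint v
  have hlapw0 : ∀ v, ((G.lapApply w0 v : ℤ) : ℚ) = (d : ℚ) * c v := by
    intro v
    have h1 : ((G.lapApply w0 v : ℤ) : ℚ) = ∑ u, ((w0 v : ℚ) - (w0 u : ℚ)) * (G.e u v : ℚ) := by
      rw [lap_eq]; push_cast; rfl
    rw [h1]
    calc ∑ u, ((w0 v : ℚ) - (w0 u : ℚ)) * (G.e u v : ℚ)
        = ∑ u, ((x v - x u) * (G.e u v : ℚ)) * d := by
          refine Finset.sum_congr rfl fun u _ => ?_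
          rw [hw0cast v, hw0cast u]
          ring
      _ = (∑ u, (x v - x u) * (G.e u v : ℚ)) * d := by rw [← Finset.sum_mul]
      _ = (d:ℚ) * c v := by rw [← lapQ_apply, hx]; ring
  have hlap0 : ∀ v, v ≠ q → G.lapApply w0 v = (d:ℤ) := by
    intro v hv
    have h := hlapw0 v
    rw [hcdef] at h
    simp only [hv, if_false] at h
    rw [mul_one] at h
    exact_mod_cast h
  set w : V → ℤ := fun v => w0 v - w0 q with hw
  have hlapw : ∀ v, G.lapApply w v = G.lapApply w0 v := by
    intro v
    rw [lap_eq, lap_eq]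
    refine Finset.sum_congr rfl fun u _ => ?_
    simp only [hw]; ring
  have hwq : w q = 0 := by simp [hw]
  have hd1 : (1:ℤ) ≤ (d:ℤ) := by exact_mod_cast hdpos
  have hpos : ∀ v, 0 ≤ w v := by
    by_contra hcon
    push_neg at hcon
    obtain ⟨b, hb⟩ := hcon
    obtain ⟨v0, -, hv0⟩ := Finset.exists_min_image Finset.univ w ⟨q, mem_univ q⟩
    have hv0b : w v0 ≤ w b := hv0 b (mem_univ b)
    have hv0q : v0 ≠ q := by
      intro h; rw [h, hwq] at hv0b; omega
    have hlapv0 := hlap0 v0 hv0q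
    have hnonpos : G.lapApply w v0 ≤ 0 := by
      rw [lap_eq]
      refine Finset.sum_nonpos fun u _ => ?_
      have h1 : w v0 - w u ≤ 0 := by have := hv0 u (mem_univ u); omega
      have h2 : (0:ℤ) ≤ (G.e u v0 : ℤ) := Int.natCast_nonneg _
      exact mul_nonpos_iff.2 (Or.inr ⟨h1, h2⟩)
    rw [hlapw v0, hlapv0] at hnonpos
    omega
  exact ⟨w, (d:ℤ), hd1, hwq, fun v hv => by rw [hlapw v]; exact hlap0 v hv, hpos⟩

end RR
namespace RR
open Multigraph Finset

set_option linter.unusedSectionVars false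

variable {V : Type*} [Fintype V] [DecidableEq V] (G : Multigraph V)

/-- The divisor `ν` associated to an ordering `r` of the vertices. -/
def nu (r : V → ℕ) : V → ℤ :=
  fun v => (∑ u ∈ Finset.univ.filter (fun u => r u < r v), (G.e u v : ℤ)) - 1

lemma nu_not_lEffective [Nonempty V] (r : V → ℕ) : ¬ G.LEffective (nu G r) := by
  rintro ⟨h, ⟨x, hx⟩, heff⟩
  classical
  obtain ⟨v0, -, hv0⟩ := Finset.exists_min_image Finset.univ x ⟨Classical.arbitrary V, mem_univ _⟩
  have hv0' : v0 ∈ Finset.univ.filter (fun v => ∀ u, x v ≤ x u) := by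
    simp only [mem_filter, mem_univ, true_and]
    exact fun u => hv0 u (mem_univ u)
  obtain ⟨v, hvmem, hvmin⟩ := Finset.exists_min_image _ r ⟨v0, hv0'⟩
  simp only [mem_filter, mem_univ, true_and] at hvmem
  have hlt : ∀ u, r u < r v → x v < x u := by
    intro u hu
    by_contra hcon
    push_neg at hcon
    have humem : u ∈ Finset.univ.filter (fun w => ∀ z, x w ≤ x z) := by
      simp only [mem_filter, mem_univ, true_and]
      intro z
      exact le_trans hcon (hvmem z)
    have := hvmin u humem
    omega
  have hbound : G.lapApply x v ≤ ∑ u, (if r u < r v then -(G.e u v : ℤ) else 0) := by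
    rw [lap_eq]
    refine Finset.sum_le_sum fun u _ => ?_
    by_cases hcu : r u < r v
    · simp only [hcu, if_true]
      have h1 : x v - x u ≤ -1 := by have := hlt u hcu; omega
      have h2 : (0:ℤ) ≤ (G.e u v:ℤ) := Int.natCast_nonneg _
      nlinarith
    · simp only [hcu, if_false]
      have h1 : x v - x u ≤ 0 := by have := hvmem u; omega
      exact mul_nonpos_iff.2 (Or.inr ⟨h1, Int.natCast_nonneg _⟩)
  have hsum : ∑ u, (if r u < r v then -(G.e u v : ℤ) else 0)
      = - ∑ u ∈ Finset.univ.filter (fun u => r u < r v), (G.e u v : ℤ) := by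
    rw [Finset.sum_filter, ← Finset.sum_neg_distrib]
    exact Finset.sum_congr rfl fun u _ => by split_ifs <;> simp
  have hv := heff v
  have hxv : h v = nu G r v + G.lapApply x v := by
    rw [hx]; rfl
  rw [hsum] at hbound
  simp only [nu] at hxv
  omega

lemma nu_reverse_exists (r : V → ℕ) (hr : Function.Injective r) :
    ∃ r' : V → ℕ, Function.Injective r' ∧
      ∀ v, nu G r' v = ((G.vdeg v : ℤ) - 2) - nu G r v := by
  classical
  set C : ℕ := Finset.univ.sup r with hC
  have hle : ∀ u : V, r u ≤ C := fun u => Finset.le_sup (mem_univ u)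
  refine ⟨fun v => C - r v, ?_, ?_⟩
  · intro u v huv
    simp only at huv
    apply hr
    have h1 := hle u; have h2 := hle v
    omega
  · intro v
    have hfilter : Finset.univ.filter (fun u => C - r u < C - r v)
        = Finset.univ.filter (fun u => r v < r u) := by
      refine Finset.filter_congr fun u _ => ?_
      have h1 := hle u; have h2 := hle v
      constructor <;> intro h <;> omega
    have hsplit : (G.vdeg v : ℤ) = (∑ u ∈ Finset.univ.filter (fun u => r u < r v), (G.e u v : ℤ))
        + ∑ u ∈ Finset.univ.filter (fun u => r v < r u), (G.e u v : ℤ) := by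
      have h0 : (G.vdeg v : ℤ) = ∑ u, (G.e u v : ℤ) := by
        unfold Multigraph.vdeg
        push_cast
        exact Finset.sum_congr rfl fun u _ => e_symm_int G v u
      rw [h0, ← Finset.sum_filter_add_sum_filter_not Finset.univ (fun u => r u < r v)]
      congr 1
      rw [Finset.sum_filter, Finset.sum_filter]
      refine Finset.sum_congr rfl fun u _ => ?_
      rcases lt_trichotomy (r u) (r v) with h|h|h
      · simp [h, not_lt.mpr (le_of_lt h), asymm h]
      · have : u = v := hr h
        subst this
        simp [G.loopless u]
      · simp [h, not_lt.mpr (le_of_lt h), le_of_lt h]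
    show (∑ u ∈ Finset.univ.filter (fun u => C - r u < C - r v), (G.e u v : ℤ)) - 1 = _
    rw [hfilter]
    simp only [nu]
    omega

lemma sum_lt_pairs (r : V → ℕ) (hr : Function.Injective r) :
    ∑ v, ∑ u ∈ Finset.univ.filter (fun u => r u < r v), G.e u v = G.edgeCount := by
  classical
  set T1 : ℕ := ∑ v, ∑ u ∈ Finset.univ.filter (fun u => r u < r v), G.e u v with hT1
  have hT1' : T1 = ∑ v, ∑ u, if r u < r v then G.e u v else 0 :=
    Finset.sum_congr rfl fun v _ => Finset.sum_filter _ _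
  have hT2 : (∑ v, ∑ u, if r v < r u then G.e u v else 0) = T1 := by
    rw [hT1']
    have h1 : (∑ v, ∑ u, if r v < r u then G.e u v else 0)
        = ∑ v, ∑ u, if r u < r v then G.e v u else 0 := Finset.sum_comm
    rw [h1]
    exact Finset.sum_congr rfl fun v _ => Finset.sum_congr rfl fun u _ => by
      rw [G.symm v u]
  have hall : (∑ u, ∑ v, G.e u v) = 2 * T1 := by
    have hcomm : (∑ u, ∑ v, G.e u v) = ∑ v, ∑ u, G.e u v := Finset.sum_comm
    rw [hcomm]
    have hsplit : ∀ v : V, (∑ u, G.e u v)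
        = (∑ u, if r u < r v then G.e u v else 0) + ∑ u, if r v < r u then G.e u v else 0 := by
      intro v
      rw [← Finset.sum_add_distrib]
      refine Finset.sum_congr rfl fun u _ => ?_
      rcases lt_trichotomy (r u) (r v) with h|h|h
      · simp [h, asymm h]
      · have : u = v := hr h
        subst this
        simp [G.loopless u]
      · simp [h, not_lt.mpr (le_of_lt h)]
    calc (∑ v, ∑ u, G.e u v)
        = ∑ v, ((∑ u, if r u < r v then G.e u v else 0) + ∑ u, if r v < r u then G.e u v else 0) :=
          Finset.sum_congr rfl fun v _ => hsplit v
      _ = T1 + T1 := by rw [Finset.sum_add_distrib, ← hT1', hT2]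
      _ = 2 * T1 := by ring
  unfold Multigraph.edgeCount
  rw [hall]
  omega

lemma degree_nu (r : V → ℕ) (hr : Function.Injective r) :
    degree (nu G r) = (G.edgeCount : ℤ) - (Fintype.card V : ℤ) := by
  unfold Multigraph.degree
  have h : ∀ v, nu G r v = (∑ u ∈ Finset.univ.filter (fun u => r u < r v), (G.e u v : ℤ)) - 1 :=
    fun v => rfl
  calc ∑ v, nu G r v
      = ∑ v, ((∑ u ∈ Finset.univ.filter (fun u => r u < r v), (G.e u v : ℤ)) - 1) :=
        Finset.sum_congr rfl fun v _ => h v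
    _ = (∑ v, ∑ u ∈ Finset.univ.filter (fun u => r u < r v), (G.e u v : ℤ))
        - (Fintype.card V : ℤ) := by
        rw [Finset.sum_sub_distrib]
        simp [Finset.card_univ]
    _ = (G.edgeCount : ℤ) - (Fintype.card V : ℤ) := by
        congr 1
        rw [← sum_lt_pairs G r hr]
        push_cast
        rfl

end RR
namespace RR
open Multigraph Finset

set_option linter.unusedSectionVars false

variable {V : Type*} [Fintype V] [DecidableEq V] (G : Multigraph V)

lemma dhar_aux (f : V → ℤ) (q : V) :
    ∀ (k : ℕ) (L : List V), L.Nodup → q ∈ L →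
      Fintype.card V - L.length ≤ k →
      (∀ v ∈ L, f v < ∑ u ∈ Finset.univ.filter
        (fun u => L.idxOf u < L.idxOf v), (G.e u v : ℤ)) →
      (∃ r : V → ℕ, Function.Injective r ∧ ∀ v, f v ≤ nu G r v) ∨
      (∃ B : Finset V, q ∈ B ∧ B ≠ Finset.univ ∧
        ∀ v, v ∉ B → (∑ u ∈ B, (G.e u v : ℤ)) ≤ f v) := by
  intro k
  induction k with
  | zero =>
    intro L hnd hqL hlen hinv
    left
    have hlenle : L.length ≤ Fintype.card V := List.Nodup.length_le_card hnd
    have hcover : ∀ v : V, v ∈ L := by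
      have : L.toFinset.card = L.length := List.toFinset_card_of_nodup hnd
      have hcard : L.toFinset = Finset.univ := by
        apply Finset.eq_univ_of_card
        omega
      intro v
      rw [← List.mem_toFinset, hcard]
      exact mem_univ v
    refine ⟨fun v => L.idxOf v, ?_, ?_⟩
    · intro u v huv
      exact (List.idxOf_inj (hcover u)).mp huv
    · intro v
      have := hinv v (hcover v)
      simp only [nu]
      omega
  | succ k ih =>
    intro L hnd hqL hlen hinv
    by_cases hcover : ∀ v : V, v ∈ L
    · -- same as zero case
      left
      refine ⟨fun v => L.idxOf v, ?_, ?_⟩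
      · intro u v huv
        exact (List.idxOf_inj (hcover u)).mp huv
      · intro v
        have := hinv v (hcover v)
        simp only [nu]
        omega
    · push_neg at hcover
      by_cases hstuck : ∃ w : V, w ∉ L ∧ f w < ∑ u ∈ L.toFinset, (G.e u w : ℤ)
      · obtain ⟨w, hwL, hw⟩ := hstuck
        set L' : List V := L ++ [w] with hL'
        have hidx_mem : ∀ u ∈ L, L'.idxOf u = L.idxOf u :=
          fun u hu => List.idxOf_append_of_mem hu
        have hidx_w : L'.idxOf w = L.length := by
          rw [List.idxOf_append_of_notMem hwL]
          simp
        have hidx_lt : ∀ u ∈ L, L.idxOf u < L.length := fun u hu =>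
          List.idxOf_lt_length_iff.mpr hu
        have hidx_not : ∀ u, u ∉ L → u ≠ w → L'.idxOf u = L.length + 1 := by
          intro u hu hne
          rw [List.idxOf_append_of_notMem hu]
          simp [List.idxOf_cons_ne _ (Ne.symm hne)]
        refine ih L' (by
            rw [hL', List.nodup_append]
            exact ⟨hnd, List.nodup_singleton w, by simpa using fun (a : V) (ha : a ∈ L) (h : a = w) => hwL (h ▸ ha)⟩)
          (by rw [hL']; exact List.mem_append_left _ hqL)
          (by rw [hL']; simp; omega) ?_
        intro v hv
        rw [hL', List.mem_append] at hv
        rcases hv with hv | hv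
        · -- old vertex: filter set unchanged
          have hfeq : Finset.univ.filter (fun u => L'.idxOf u < L'.idxOf v)
              = Finset.univ.filter (fun u => L.idxOf u < L.idxOf v) := by
            refine Finset.filter_congr fun u _ => ?_
            rw [hidx_mem v hv]
            by_cases hu : u ∈ L
            · rw [hidx_mem u hu]
            · have h1 : L.idxOf u = L.length := List.idxOf_eq_length_iff.mpr hu
              have h2 := hidx_lt v hv
              by_cases hne : u = w
              · subst hne
                rw [hidx_w]
                omega
              · rw [hidx_not u hu hne]
                omega
          rw [hfeq]
          exact hinv v hv
        · -- new vertex w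
          have hv' : v = w := by simpa using hv
          subst hv'
          have hfeq : Finset.univ.filter (fun u => L'.idxOf u < L'.idxOf v)
              = L.toFinset := by
            ext u
            simp only [mem_filter, mem_univ, true_and, List.mem_toFinset]
            rw [hidx_w]
            constructor
            · intro h
              by_contra hu
              by_cases hne : u = v
              · subst hne
                rw [hidx_w] at h
                omega
              · rw [hidx_not u hu hne] at h
                omega
            · intro hu
              rw [hidx_mem u hu]
              exact hidx_lt u hu
          rw [hfeq]
          exact hw
      · right
        push_neg at hstuck
        refine ⟨L.toFinset, List.mem_toFinset.mpr hqL, ?_, ?_⟩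
        · intro hcon
          obtain ⟨v, hv⟩ := hcover
          exact hv (List.mem_toFinset.mp (hcon ▸ mem_univ v))
        · intro v hv
          exact hstuck v (fun h => hv (List.mem_toFinset.mpr h))

lemma dhar (f : V → ℤ) (q : V) (hq : f q < 0) :
    (∃ r : V → ℕ, Function.Injective r ∧ ∀ v, f v ≤ nu G r v) ∨
    (∃ B : Finset V, q ∈ B ∧ B ≠ Finset.univ ∧
      ∀ v, v ∉ B → (∑ u ∈ B, (G.e u v : ℤ)) ≤ f v) := by
  refine dhar_aux G f q (Fintype.card V) [q] (List.nodup_singleton q)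
    (List.mem_singleton_self q) (by omega) ?_
  intro v hv
  have hv' : v = q := by simpa using hv
  subst hv'
  have hempty : Finset.univ.filter (fun u => [v].idxOf u < [v].idxOf v) = ∅ := by
    apply Finset.filter_false_of_mem
    intro u _
    simp [List.idxOf_cons_self]
  rw [hempty]
  simpa using hq

end RR
namespace RR
open Multigraph Finset

set_option linter.unusedSectionVars false

variable {V : Type*} [Fintype V] [DecidableEq V] (G : Multigraph V)

/-- The dichotomy predicate. -/
def Dich (f : V → ℤ) : Prop :=
  G.LEffective f ∨ ∃ r : V → ℕ, Function.Injective r ∧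
    ∃ g : V → ℤ, G.LinEquiv f g ∧ ∀ v, g v ≤ nu G r v

lemma dich_congr {G : Multigraph V} {f f' : V → ℤ} (h : G.LinEquiv f f') (hd : Dich G f') :
    Dich G f := by
  rcases hd with h1 | ⟨r, hr, g, hg, hle⟩
  · exact Or.inl ((lEffective_congr h).mpr h1)
  · exact Or.inr ⟨r, hr, g, linEquiv_trans h hg, hle⟩

lemma lemmaA (q : V) (w : V → ℤ) (k : ℤ) (hk : 1 ≤ k) (hwq : w q = 0)
    (hlapw : ∀ v, v ≠ q → G.lapApply w v = k) (hwpos : ∀ v, 0 ≤ w v) :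
    ∀ (N : ℕ) (f : V → ℤ), (∀ v, v ≠ q → 0 ≤ f v) →
      (∑ v, f v * w v).toNat ≤ N → Dich G f := by
  have hΦnonneg : ∀ g : V → ℤ, (∀ v, v ≠ q → 0 ≤ g v) → 0 ≤ ∑ v, g v * w v := by
    intro g hg
    refine Finset.sum_nonneg fun v _ => ?_
    by_cases hv : v = q
    · subst hv; rw [hwq]; simp
    · exact mul_nonneg (hg v hv) (hwpos v)
  intro N
  induction N using Nat.strong_induction_on with
  | _ N ih =>
    intro f hf hΦ
    by_cases hfq : 0 ≤ f q
    · left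
      apply lEffective_of_effective
      intro v
      by_cases hv : v = q
      · subst hv; exact hfq
      · exact hf v hv
    · push_neg at hfq
      rcases dhar G f q (by omega) with ⟨r, hr, hle⟩ | ⟨B, hqB, hBne, hB⟩
      · exact Or.inr ⟨r, hr, f, linEquiv_refl G f, hle⟩
      · classical
        set x : V → ℤ := fun v => if v ∈ B then 0 else -1 with hxdef
        set f' : V → ℤ := f + G.lapApply x with hf'def
        have hlapxB : ∀ v, v ∈ B → 0 ≤ G.lapApply x v := by
          intro v hv
          rw [lap_eq]
          refine Finset.sum_nonneg fun u _ => ?_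
          by_cases hu : u ∈ B
          · simp [hxdef, hu, hv]
          · have hxx : x v - x u = 1 := by simp [hxdef, hu, hv]
            rw [hxx, one_mul]
            exact Int.natCast_nonneg _
        have hlapxO : ∀ v, v ∉ B → G.lapApply x v = - ∑ u ∈ B, (G.e u v : ℤ) := by
          intro v hv
          rw [lap_eq]
          have hterm : ∀ u, (x v - x u) * (G.e u v : ℤ)
              = if u ∈ B then -(G.e u v : ℤ) else 0 := by
            intro u
            by_cases hu : u ∈ B
            · simp [hxdef, hu, hv]
            · simp [hxdef, hu, hv]
          rw [Finset.sum_congr rfl fun u _ => hterm u]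
          rw [Finset.sum_ite_mem, Finset.univ_inter, ← Finset.sum_neg_distrib]
        have hf'T : ∀ v, v ≠ q → 0 ≤ f' v := by
          intro v hv
          by_cases hvB : v ∈ B
          · have h1 := hlapxB v hvB
            have h2 := hf v hv
            simp only [hf'def, Pi.add_apply]
            omega
          · have h1 := hlapxO v hvB
            have h2 := hB v hvB
            simp only [hf'def, Pi.add_apply]
            omega
        -- potential strictly decreases
        obtain ⟨v0, hv0⟩ : ∃ v0, v0 ∉ B := by
          by_contra hcon
          push_neg at hcon
          exact hBne (Finset.eq_univ_iff_forall.mpr hcon)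
        have hsplit : ∑ v, f' v * w v = (∑ v, f v * w v) + ∑ v, G.lapApply x v * w v := by
          simp only [hf'def, Pi.add_apply, add_mul]
          rw [Finset.sum_add_distrib]
        have hsym : ∑ v, G.lapApply x v * w v = ∑ v, x v * G.lapApply w v := by
          have h1 : ∑ v, G.lapApply x v * w v = ∑ v, w v * G.lapApply x v :=
            Finset.sum_congr rfl fun v _ => mul_comm _ _
          rw [h1, lap_symm]
        have hterm2 : ∀ v, x v * G.lapApply w v = if v ∈ B then 0 else -k := by
          intro v
          by_cases hv : v ∈ B
          · simp [hxdef, hv]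
          · have hvq : v ≠ q := fun h => hv (h ▸ hqB)
            simp [hxdef, hv, hlapw v hvq]
        have hsum2 : ∑ v, x v * G.lapApply w v ≤ -k := by
          rw [Finset.sum_congr rfl fun v _ => hterm2 v]
          rw [← Finset.add_sum_erase _ _ (mem_univ v0)]
          have h1 : (if v0 ∈ B then (0:ℤ) else -k) = -k := by simp [hv0]
          rw [h1]
          have h2 : ∑ v ∈ Finset.univ.erase v0, (if v ∈ B then (0:ℤ) else -k) ≤ 0 := by
            refine Finset.sum_nonpos fun v _ => ?_
            split_ifs
            · exact le_refl 0
            · omega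
          omega
        have hΦ' : 0 ≤ ∑ v, f' v * w v := hΦnonneg f' hf'T
        have hΦ0 : 0 ≤ ∑ v, f v * w v := hΦnonneg f hf
        have hdec : ∑ v, f' v * w v ≤ (∑ v, f v * w v) - 1 := by
          rw [hsplit, hsym] at *
          omega
        have htn : (∑ v, f' v * w v).toNat < N := by omega
        exact dich_congr ⟨x, hf'def⟩ (ih _ htn f' hf'T (le_refl _))

lemma dichotomy (hG : G.Connected) (f : V → ℤ) : Dich G f := by
  haveI : Nonempty V := hG.nonempty
  classical
  set q : V := Classical.arbitrary V with hqdef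
  obtain ⟨w, k, hk, hwq, hlapw, hwpos⟩ := exists_weight G hG q
  set t : ℤ := ∑ v, |f v| with ht
  have htnn : 0 ≤ t := Finset.sum_nonneg fun v _ => abs_nonneg _
  have htge : ∀ v, |f v| ≤ t :=
    fun v => Finset.single_le_sum (fun u _ => abs_nonneg (f u)) (mem_univ v)
  set f0 : V → ℤ := f + G.lapApply (t • w) with hf0
  have hf0T : ∀ v, v ≠ q → 0 ≤ f0 v := by
    intro v hv
    have hl : G.lapApply (t • w) v = t * k := by
      rw [lap_smul]
      simp [hlapw v hv]
    have h1 : t * 1 ≤ t * k := by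
      apply mul_le_mul_of_nonneg_left hk htnn
    have h2 := htge v
    have h3 := abs_le.mp h2
    simp only [hf0, Pi.add_apply, hl]
    omega
  exact dich_congr ⟨t • w, hf0⟩
    (lemmaA G q w k hk hwq hlapw hwpos _ f0 hf0T (le_refl _))

lemma not_both [Nonempty V] {G : Multigraph V} {f : V → ℤ} (h1 : G.LEffective f)
    {r : V → ℕ} {g : V → ℤ} (hg : G.LinEquiv f g) (hle : ∀ v, g v ≤ nu G r v) : False := by
  apply nu_not_lEffective G r
  have hgeff : G.LEffective g := (lEffective_congr hg).mp h1
  exact lEffective_of_le hgeff hle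

end RR
namespace RR
open Multigraph Finset

set_option linter.unusedSectionVars false

variable {V : Type*} [Fintype V] [DecidableEq V] (G : Multigraph V)

/-- The positive degree of a divisor. -/
def degPlus (f : V → ℤ) : ℤ := ∑ v, max (f v) 0

lemma degPlus_nonneg (f : V → ℤ) : 0 ≤ degPlus f :=
  Finset.sum_nonneg fun v _ => le_max_right _ _

lemma degPlus_neg (f : V → ℤ) : degPlus (-f) = degPlus f - degree f := by
  unfold degPlus Multigraph.degree
  rw [← Finset.sum_sub_distrib]
  refine Finset.sum_congr rfl fun v _ => ?_
  simp only [Pi.neg_apply]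
  rcases le_total (f v) 0 with h | h
  · rw [max_eq_right h, max_eq_left (neg_nonneg.mpr h)]
    ring
  · rw [max_eq_left h, max_eq_right (neg_nonpos.mpr h)]
    ring

/-- The defining set of the rank. -/
def rset (G : Multigraph V) (f : V → ℤ) : Set ℤ :=
  {-1} ∪ {r : ℤ | 0 ≤ r ∧
    ∀ l : V → ℤ, Effective l → degree l = r → G.LEffective (f - l)}

lemma rank_eq_sSup (f : V → ℤ) : G.rank f = sSup (rset G f) := rfl

lemma rset_ub [Nonempty V] {G : Multigraph V} {f f' : V → ℤ} (hff' : G.LinEquiv f f')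
    (r : V → ℕ) {s : ℤ} (hs : s ∈ rset G f) : s ≤ degPlus (f' - nu G r) - 1 := by
  classical
  have hdp := degPlus_nonneg (f' - nu G r)
  simp only [rset, Set.mem_union, Set.mem_singleton_iff, Set.mem_setOf_eq] at hs
  rcases hs with hs | ⟨hs0, hsall⟩
  · omega
  · by_contra hcon
    push_neg at hcon
    set p := degPlus (f' - nu G r) with hpdef
    have hsp : p ≤ s := by omega
    set q0 : V := Classical.arbitrary V with hq0
    set l : V → ℤ := fun v => max (f' v - nu G r v) 0
      + (s - p) * (if v = q0 then 1 else 0) with hl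
    have hleff : Effective l := by
      intro v
      simp only [hl]
      have h1 : (0:ℤ) ≤ max (f' v - nu G r v) 0 := le_max_right _ _
      split_ifs <;> nlinarith
    have hldeg : degree l = s := by
      unfold Multigraph.degree
      simp only [hl]
      rw [Finset.sum_add_distrib, ← Finset.mul_sum, Finset.sum_ite_eq' Finset.univ q0]
      simp only [mem_univ, if_true, mul_one]
      have : ∑ v, max (f' v - nu G r v) 0 = p := by
        rw [hpdef]
        unfold degPlus
        exact Finset.sum_congr rfl fun v _ => by simp [Pi.sub_apply]
      omega
    have h1 : G.LEffective (f - l) := hsall l hleff hldeg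
    have heff2 : Effective (nu G r + l - f') := by
      intro v
      simp only [Pi.add_apply, Pi.sub_apply, hl]
      have h2 : f' v - nu G r v ≤ max (f' v - nu G r v) 0 := le_max_left _ _
      split_ifs <;> nlinarith
    have h2 : G.LEffective (nu G r + l - f) := by
      have hlin : G.LinEquiv (nu G r + l - f) (nu G r + l - f') :=
        linEquiv_sub_left _ hff'
      exact (lEffective_congr hlin).mpr (lEffective_of_effective heff2)
    have h3 : G.LEffective (nu G r) := by
      have heq : nu G r = (f - l) + (nu G r + l - f) := by
        funext v
        simp only [Pi.add_apply, Pi.sub_apply]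
        ring
      rw [heq]
      exact lEffective_add h1 h2
    exact nu_not_lEffective G r h3

lemma exists_pair_le (hG : G.Connected) {f : V → ℤ} {l : V → ℤ}
    (hl : Effective l) (hnot : ¬ G.LEffective (f - l)) :
    ∃ (f' : V → ℤ) (r : V → ℕ), G.LinEquiv f f' ∧ Function.Injective r ∧
      degPlus (f' - nu G r) ≤ degree l := by
  rcases dichotomy G hG (f - l) with h | ⟨r, hr, g, hg, hle⟩
  · exact absurd h hnot
  · refine ⟨g + l, r, ?_, hr, ?_⟩
    · have h1 : G.LinEquiv (f - l + l) (g + l) := linEquiv_add_right l hg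
      have h2 : f = f - l + l := by funext v; simp
      rw [h2]
      exact h1
    · unfold degPlus Multigraph.degree
      refine Finset.sum_le_sum fun v _ => ?_
      have h1 := hle v
      have h2 := hl v
      simp only [Pi.add_apply, Pi.sub_apply]
      exact max_le (by omega) h2

lemma rank_char (hG : G.Connected) (f : V → ℤ) :
    ∃ p : ℕ, G.rank f = (p : ℤ) - 1 ∧
      (∀ (f' : V → ℤ) (r : V → ℕ), G.LinEquiv f f' → Function.Injective r →
        (p : ℤ) ≤ degPlus (f' - nu G r)) ∧
      ∃ (f' : V → ℤ) (r : V → ℕ), G.LinEquiv f f' ∧ Function.Injective r ∧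
        degPlus (f' - nu G r) = (p : ℤ) := by
  classical
  haveI : Nonempty V := hG.nonempty
  have hex : ∃ n : ℕ, ∃ (f' : V → ℤ) (r : V → ℕ), G.LinEquiv f f' ∧
      Function.Injective r ∧ degPlus (f' - nu G r) = (n : ℤ) := by
    set r0 : V → ℕ := fun v => ((Fintype.equivFin V) v : ℕ) with hr0
    have hr0inj : Function.Injective r0 := fun a b h =>
      (Fintype.equivFin V).injective (Fin.ext h)
    exact ⟨(degPlus (f - nu G r0)).toNat, f, r0, linEquiv_refl G f, hr0inj,
      (Int.toNat_of_nonneg (degPlus_nonneg _)).symm⟩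
  set p := Nat.find hex with hp
  obtain ⟨f1, r1, hf1, hr1, hval1⟩ := Nat.find_spec hex
  have hub : ∀ s ∈ rset G f, s ≤ (p:ℤ) - 1 := by
    intro s hs
    have h := rset_ub hf1 r1 hs
    rw [hval1] at h
    exact h
  have hmem : (p:ℤ) - 1 ∈ rset G f := by
    rcases Nat.eq_zero_or_pos p with h0 | hpos
    · left
      simp [h0]
    · right
      have hp1 : (1:ℤ) ≤ (p:ℤ) := by exact_mod_cast hpos
      refine ⟨by omega, ?_⟩
      intro l hl hdeg
      by_contra hnot
      obtain ⟨f', r, hff', hr, hle⟩ := exists_pair_le G hG hl hnot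
      have hnn := degPlus_nonneg (f' - nu G r)
      have hpred : ∃ (f'' : V → ℤ) (r'' : V → ℕ), G.LinEquiv f f'' ∧
          Function.Injective r'' ∧
          degPlus (f'' - nu G r'') = ((degPlus (f' - nu G r)).toNat : ℤ) :=
        ⟨f', r, hff', hr, (Int.toNat_of_nonneg hnn).symm⟩
      have hlt : (degPlus (f' - nu G r)).toNat < p := by
        rw [hdeg] at hle
        omega
      exact Nat.find_min hex hlt hpred
  refine ⟨p, ?_, ?_, f1, r1, hf1, hr1, hval1⟩
  · rw [rank_eq_sSup]
    exact IsGreatest.csSup_eq ⟨hmem, hub⟩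
  · intro f' r hff' hr
    have hnn := degPlus_nonneg (f' - nu G r)
    have hpred : ∃ (f'' : V → ℤ) (r'' : V → ℕ), G.LinEquiv f f'' ∧
        Function.Injective r'' ∧
        degPlus (f'' - nu G r'') = ((degPlus (f' - nu G r)).toNat : ℤ) :=
      ⟨f', r, hff', hr, (Int.toNat_of_nonneg hnn).symm⟩
    have := Nat.find_min' hex hpred
    omega

end RR
namespace RR
open Multigraph Finset

set_option linter.unusedSectionVars false

variable {V : Type*} [Fintype V] [DecidableEq V] (G : Multigraph V)

lemma pair_transfer {f f' : V → ℤ} {r : V → ℕ} (hff' : G.LinEquiv f f')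
    (hr : Function.Injective r) :
    ∃ (g' : V → ℤ) (r' : V → ℕ),
      G.LinEquiv ((fun w => (G.vdeg w : ℤ) - 2) - f) g' ∧ Function.Injective r' ∧
      degPlus (g' - nu G r')
        = degPlus (f' - nu G r) - (degree f - ((G.edgeCount : ℤ) - (Fintype.card V : ℤ))) := by
  obtain ⟨r', hr', hnu⟩ := nu_reverse_exists G r hr
  refine ⟨(fun w => (G.vdeg w : ℤ) - 2) - f', r', linEquiv_sub_left _ hff', hr', ?_⟩
  have hfun : ((fun w => (G.vdeg w : ℤ) - 2) - f') - nu G r' = -(f' - nu G r) := by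
    funext v
    have h := hnu v
    simp only [Pi.sub_apply, Pi.neg_apply]
    omega
  rw [hfun, degPlus_neg, degree_sub, degree_nu G r hr, linEquiv_degree hff']

end RR


/-- Riemann–Roch for graphs, Baker–Norine:
`ρ(f) − ρ(κ − f) = deg(f) − g + 1` where `κ(v) = deg(v) − 2` and
`g = m − n + 1`. -/
theorem riemann_roch (G : Multigraph V) (hG : G.Connected) (f : V → ℤ) :
    G.rank f - G.rank ((fun w => (G.vdeg w : ℤ) - 2) - f)
      = degree f - ((G.edgeCount : ℤ) - (Fintype.card V : ℤ) + 1) + 1 := by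
  classical
  haveI : Nonempty V := hG.nonempty
  open RR in
  set κ : V → ℤ := fun w => (G.vdeg w : ℤ) - 2 with hκ
  set mn : ℤ := (G.edgeCount : ℤ) - (Fintype.card V : ℤ) with hmn
  obtain ⟨p, hpr, hplb, f1, r1, hf1, hr1, hval1⟩ := RR.rank_char G hG f
  obtain ⟨pk, hpkr, hpklb, g1, s1, hg1, hs1, hval2⟩ := RR.rank_char G hG (κ - f)
  -- transfer the minimal pair of f
  obtain ⟨g', r', hg', hr', hval'⟩ := RR.pair_transfer G hf1 hr1
  have h1 : (pk : ℤ) ≤ (p : ℤ) - (degree f - mn) := by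
    have := hpklb g' r' hg' hr'
    rw [hval', hval1] at this
    omega
  -- transfer the minimal pair of κ - f
  obtain ⟨g'', r'', hg'', hr'', hval''⟩ := RR.pair_transfer G hg1 hs1
  have hkk : κ - (κ - f) = f := by funext v; simp
  rw [hkk] at hg''
  have h2 : (p : ℤ) ≤ (pk : ℤ) - (degree (κ - f) - mn) := by
    have := hplb g'' r'' hg'' hr''
    rw [hval'', hval2] at this
    omega
  -- degree of κ
  have hdegκ : degree κ = 2 * mn := by
    obtain ⟨r2, hr2, hnu2⟩ := RR.nu_reverse_exists G r1 hr1
    have hκeq : κ = RR.nu G r2 + RR.nu G r1 := by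
      funext v
      have h := hnu2 v
      simp only [hκ, Pi.add_apply]
      omega
    rw [hκeq, RR.degree_add, RR.degree_nu G r2 hr2, RR.degree_nu G r1 hr1, hmn]
    ring
  have hdsub : degree (κ - f) = 2 * mn - degree f := by
    rw [RR.degree_sub, hdegκ]
  rw [hpr, hpkr]
  rw [hdsub] at h2
  omega
end

section
/- Let T be a tree (a finite connected acyclic graph) and let f be a divisor on T with deg(f) ≥ 0. Then ρ(f) = deg(f). -/
open Multigraph

variable {V : Type*} [Fintype V] [DecidableEq V]

section Aux

variable {V : Type*} [Fintype V] [DecidableEq V]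

open Multigraph Finset

lemma lapApply_zero (G : Multigraph V) : G.lapApply 0 = 0 := by
  funext w
  simp [Multigraph.lapApply]

lemma lapApply_add (G : Multigraph V) (x y : V → ℤ) :
    G.lapApply (x + y) = G.lapApply x + G.lapApply y := by
  funext w
  simp only [Multigraph.lapApply, Pi.add_apply, add_mul, Finset.sum_add_distrib]
  ring

lemma lapApply_sum {ι : Type*} (G : Multigraph V) (s : Finset ι) (g : ι → V → ℤ) :
    G.lapApply (∑ i ∈ s, g i) = ∑ i ∈ s, G.lapApply (g i) := by
  induction s using Finset.cons_induction with
  | empty => simp [lapApply_zero]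
  | cons a s ha ih => rw [Finset.sum_cons, Finset.sum_cons, lapApply_add, ih]

lemma lapApply_const_mul (G : Multigraph V) (c : ℤ) (x : V → ℤ) :
    G.lapApply (fun w => c * x w) = fun w => c * G.lapApply x w := by
  funext w
  simp only [Multigraph.lapApply, Finset.mul_sum, mul_sub]
  rw [show (∑ u, c * x u * (G.e u w : ℤ)) = ∑ u, c * (x u * (G.e u w : ℤ)) by
    exact Finset.sum_congr rfl fun u _ => by ring]
  ring

lemma degree_lapApply (G : Multigraph V) (x : V → ℤ) : degree (G.lapApply x) = 0 := by
  unfold Multigraph.degree Multigraph.lapApply Multigraph.vdeg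
  push_cast
  rw [Finset.sum_sub_distrib]
  have h2 : ∑ v, ∑ u, x u * (G.e u v : ℤ) = ∑ v, x v * ∑ u, (G.e v u : ℤ) := by
    rw [Finset.sum_comm]
    exact Finset.sum_congr rfl fun v _ => by rw [Finset.mul_sum]
  rw [h2]
  simp [Finset.mul_sum]

lemma degree_sub (f g : V → ℤ) : degree (f - g) = degree f - degree g := by
  simp [Multigraph.degree, Finset.sum_sub_distrib]

lemma lap_indicator (G : Multigraph V) (A : V → Prop) [DecidablePred A]
    (u v : V) (hu : A u) (hv : ¬ A v) (huv : G.e u v = 1)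
    (hcross : ∀ a b, G.e a b ≠ 0 → ¬(a = u ∧ b = v) → ¬(a = v ∧ b = u) → (A a ↔ A b)) :
    G.lapApply (fun w => if A w then 1 else 0) =
      (epsDiv u - epsDiv v : V → ℤ) := by
  have hune : u ≠ v := fun h => hv (h ▸ hu)
  funext w
  have key : G.lapApply (fun w => if A w then (1:ℤ) else 0) w
      = ∑ z, ((if A w then (1:ℤ) else 0) - (if A z then 1 else 0)) * (G.e z w : ℤ) := by
    unfold Multigraph.lapApply Multigraph.vdeg
    push_cast
    rw [Finset.mul_sum, ← Finset.sum_sub_distrib]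
    exact Finset.sum_congr rfl fun z _ => by rw [G.symm w z]; ring
  rw [key]
  by_cases hwu : w = u
  · rw [hwu]
    rw [Finset.sum_eq_single v]
    · simp [epsDiv, hu, hv, G.symm v u, huv, hune]
    · intro z _ hzv
      by_cases hz : G.e z u = 0
      · simp [hz]
      · have hAz : A z := by
          refine (hcross z u hz ?_ ?_).mpr hu
          · rintro ⟨rfl, rfl⟩; exact hv hu
          · rintro ⟨rfl, -⟩; exact hzv rfl
        simp [hu, hAz]
    · intro h; exact absurd (Finset.mem_univ v) h
  · by_cases hwv : w = v
    · rw [hwv]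
      rw [Finset.sum_eq_single u]
      · simp [epsDiv, hu, hv, huv, hune.symm]
      · intro z _ hzu
        by_cases hz : G.e z v = 0
        · simp [hz]
        · have hAz : ¬ A z := by
            intro hAz
            exact hv ((hcross z v hz (by rintro ⟨rfl, -⟩; exact hzu rfl)
              (by rintro ⟨rfl, rfl⟩; exact hzu rfl)).mp hAz)
          simp [hv, hAz]
      · intro h; exact absurd (Finset.mem_univ u) h
    · rw [Finset.sum_eq_zero, show (epsDiv u - epsDiv v : V → ℤ) w = 0 by
        simp [epsDiv, hwu, hwv]]
      intro z _
      by_cases hz : G.e z w = 0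
      · simp [hz]
      · have hiff : A z ↔ A w := hcross z w hz (by rintro ⟨-, rfl⟩; exact hwv rfl)
          (by rintro ⟨-, rfl⟩; exact hwu rfl)
        by_cases hAw : A w
        · simp [hAw, hiff.mpr hAw]
        · have hAz : ¬ A z := fun h => hAw (hiff.mp h)
          simp [hAw, hAz]

lemma tree_eps_adj (G : Multigraph V) (hT : G.IsTree) (u v : V)
    (h : G.toSimple.Adj u v) :
    ∃ x, (epsDiv u - epsDiv v : V → ℤ) = G.lapApply x := by
  classical
  have he : s(u, v) ∈ G.toSimple.edgeSet := h
  have hbridge := (SimpleGraph.isAcyclic_iff_forall_edge_isBridge.mp hT.1.IsAcyclic) he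
  rw [SimpleGraph.isBridge_iff] at hbridge
  set G' := G.toSimple \ SimpleGraph.fromEdgeSet {s(u, v)} with hG'
  have hA : ∀ a b : V, G.e a b ≠ 0 → ¬(a = u ∧ b = v) → ¬(a = v ∧ b = u) →
      G'.Reachable a b := by
    intro a b hab h1 h2
    have hadj : G'.Adj a b := by
      rw [hG', SimpleGraph.sdiff_adj]
      refine ⟨hab, ?_⟩
      rw [SimpleGraph.fromEdgeSet_adj]
      rintro ⟨hmem, -⟩
      rw [Set.mem_singleton_iff, Sym2.eq_iff] at hmem
      rcases hmem with ⟨rfl, rfl⟩ | ⟨rfl, rfl⟩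
      · exact h1 ⟨rfl, rfl⟩
      · exact h2 ⟨rfl, rfl⟩
    exact hadj.reachable
  letI : DecidablePred (fun w => G'.Reachable w u) := Classical.decPred _
  refine ⟨fun w => if G'.Reachable w u then 1 else 0,
    (lap_indicator G (fun w => G'.Reachable w u) u v (SimpleGraph.Reachable.refl u) ?_ ?_ ?_).symm⟩
  · intro hvu
    exact hbridge hvu.symm
  · have h1 : G.e u v ≠ 0 := h
    have h2 : G.e u v ≤ 1 := hT.2 u v
    omega
  · intro a b hab h1 h2
    have := hA a b hab h1 h2
    exact ⟨fun hr => this.symm.trans hr, fun hr => this.trans hr⟩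

lemma tree_eps (G : Multigraph V) (hT : G.IsTree) (u v : V) :
    ∃ x, (epsDiv u - epsDiv v : V → ℤ) = G.lapApply x := by
  obtain ⟨p⟩ := hT.1.isConnected.preconnected u v
  induction p with
  | nil => exact ⟨0, by rw [lapApply_zero]; simp⟩
  | @cons a b c hab p ih =>
    obtain ⟨x1, hx1⟩ := tree_eps_adj G hT a b hab
    obtain ⟨x2, hx2⟩ := ih
    refine ⟨x1 + x2, ?_⟩
    rw [lapApply_add, ← hx1, ← hx2]
    abel

lemma tree_deg0 (G : Multigraph V) (hT : G.IsTree) (h : V → ℤ) (hd : degree h = 0) :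
    ∃ x, h = G.lapApply x := by
  obtain ⟨v0⟩ : Nonempty V := hT.1.isConnected.nonempty
  choose x hx using tree_eps G hT
  refine ⟨∑ v, (fun w => h v * x v v0 w), ?_⟩
  rw [lapApply_sum]
  funext w
  rw [Finset.sum_apply]
  have hterm : ∀ v, G.lapApply (fun w => h v * x v v0 w) w
      = h v * ((epsDiv v - epsDiv v0 : V → ℤ) w) := by
    intro v
    rw [lapApply_const_mul, ← hx v v0]
  rw [Finset.sum_congr rfl fun v _ => hterm v]
  have h1 : ∑ v, h v * (if w = v then (1:ℤ) else 0) = h w := by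
    simp [mul_ite, Finset.sum_ite_eq]
  have h2 : ∑ v, h v * (if w = v0 then (1:ℤ) else 0) = 0 := by
    rw [← Finset.sum_mul, show (∑ v, h v) = 0 from hd, zero_mul]
  calc h w = (∑ v, h v * (if w = v then (1:ℤ) else 0))
      - ∑ v, h v * (if w = v0 then (1:ℤ) else 0) := by rw [h1, h2, sub_zero]
    _ = ∑ v, h v * ((epsDiv v - epsDiv v0 : V → ℤ) w) := by
        rw [← Finset.sum_sub_distrib]
        exact Finset.sum_congr rfl fun v _ => by simp only [Pi.sub_apply, epsDiv]; ring
  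
lemma tree_leff (G : Multigraph V) (hT : G.IsTree) (f : V → ℤ) (hdeg : 0 ≤ degree f) :
    G.LEffective f := by
  obtain ⟨v0⟩ : Nonempty V := hT.1.isConnected.nonempty
  set g : V → ℤ := fun w => if w = v0 then degree f else 0 with hgdef
  have hg : degree g = degree f := by
    simp [Multigraph.degree, hgdef, Finset.sum_ite_eq']
  obtain ⟨x, hx⟩ := tree_deg0 G hT (g - f) (by rw [degree_sub, hg, sub_self])
  refine ⟨g, ⟨x, ?_⟩, ?_⟩
  · rw [← hx]; abel
  · intro v
    simp only [hgdef]
    split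
    · exact hdeg
    · exact le_refl 0

lemma leff_deg_nonneg (G : Multigraph V) (f : V → ℤ) (h : G.LEffective f) :
    0 ≤ degree f := by
  obtain ⟨g, ⟨x, hg⟩, heff⟩ := h
  have h1 : degree g = degree f := by
    rw [hg]
    simp [Multigraph.degree, Finset.sum_add_distrib]
    have := degree_lapApply G x
    unfold Multigraph.degree at this
    linarith [this]
  rw [← h1]
  exact Finset.sum_nonneg fun v _ => heff v

end Aux

/-- on a tree, a divisor of nonnegative degree has rank equal
to its degree. -/
theorem rank_tree (G : Multigraph V) (hT : G.IsTree)
    (f : V → ℤ) (hdeg : 0 ≤ degree f) :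
    G.rank f = degree f := by
  classical
  have hne : Nonempty V := hT.1.isConnected.nonempty
  obtain ⟨v0⟩ := hne
  set S : Set ℤ := ({-1} ∪ {r : ℤ | 0 ≤ r ∧
    ∀ l : V → ℤ, Effective l → degree l = r → G.LEffective (f - l)}) with hS
  have hub : ∀ r ∈ S, r ≤ degree f := by
    intro r hr
    simp only [hS, Set.mem_union, Set.mem_singleton_iff, Set.mem_setOf_eq] at hr
    rcases hr with rfl | ⟨hr0, hr⟩
    · linarith
    · by_contra hlt
      push_neg at hlt
      set l : V → ℤ := fun w => if w = v0 then r else 0 with hldef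
      have hdl : degree l = r := by
        simp [Multigraph.degree, hldef, Finset.sum_ite_eq']
      have heff : Effective l := by
        intro v
        simp only [hldef]
        split
        · exact hr0
        · exact le_refl 0
      have h1 := leff_deg_nonneg G _ (hr l heff hdl)
      rw [degree_sub, hdl] at h1
      linarith
  have hmem : degree f ∈ S := by
    refine Set.mem_union_right _ ⟨hdeg, fun l hl hdl => tree_leff G hT _ ?_⟩
    rw [degree_sub, hdl, sub_self]
  exact le_antisymm (csSup_le ⟨-1, Set.mem_union_left _ rfl⟩ hub)
    (le_csSup ⟨degree f, hub⟩ hmem)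
end

section
/- Let T be a tree (a finite connected acyclic graph) and let f be a divisor on T with deg(f) = 0. Then f is linearly equivalent to the zero divisor; in particular f is L-effective. -/
open Multigraph

variable {V : Type*} [Fintype V] [DecidableEq V]

namespace Multigraph

lemma lapApply_eq_sum (G : Multigraph V) (x : V → ℤ) (w : V) :
    G.lapApply x w = ∑ u, (x w - x u) * (G.e u w : ℤ) := by
  simp only [lapApply, vdeg, sub_mul, Finset.sum_sub_distrib, Nat.cast_sum, Finset.mul_sum]
  congr 1
  exact Finset.sum_congr rfl fun u _ => by rw [G.symm w u]

lemma exists_lap_eps_edge (G : Multigraph V) (hT : G.IsTree) {a b : V}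
    (hab : G.e a b ≠ 0) :
    ∃ x, G.lapApply x = epsDiv b - epsDiv a := by
  classical
  have hadj : G.toSimple.Adj a b := hab
  have hbr : ¬ (G.toSimple \ SimpleGraph.fromEdgeSet {s(a, b)}).Reachable a b :=
    ((SimpleGraph.isBridge_iff).mp
      ((SimpleGraph.isAcyclic_iff_forall_adj_isBridge).mp hT.1.IsAcyclic hadj))
  set G' := G.toSimple \ SimpleGraph.fromEdgeSet {s(a, b)} with hG'
  have hG'adj : ∀ {u w : V}, G.toSimple.Adj u w → s(u, w) ≠ s(a, b) → G'.Adj u w := by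
    intro u w h hne
    rw [hG', SimpleGraph.sdiff_adj]
    refine ⟨h, ?_⟩
    rw [SimpleGraph.fromEdgeSet_adj]
    rintro ⟨hs, -⟩
    simp only [Set.mem_singleton_iff] at hs
    exact hne hs
  have key : ∀ (w c : V), G.toSimple.Walk w c →
      G'.Reachable w a ∨ G'.Reachable w b ∨ G'.Reachable w c := by
    intro w c p
    induction p with
    | nil => exact Or.inr (Or.inr (SimpleGraph.Reachable.refl _))
    | @cons u d e h q ih =>
      by_cases hs : s(u, d) = s(a, b)
      · rcases Sym2.eq_iff.mp hs with ⟨rfl, rfl⟩ | ⟨rfl, rfl⟩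
        · exact Or.inl (SimpleGraph.Reachable.refl _)
        · exact Or.inr (Or.inl (SimpleGraph.Reachable.refl _))
      · have hadj' : G'.Adj u d := hG'adj h hs
        rcases ih with h1 | h1 | h1
        · exact Or.inl (hadj'.reachable.trans h1)
        · exact Or.inr (Or.inl (hadj'.reachable.trans h1))
        · exact Or.inr (Or.inr (hadj'.reachable.trans h1))
  have side : ∀ w, G'.Reachable w a ∨ G'.Reachable w b := by
    intro w
    obtain ⟨p⟩ := hT.1.isConnected.preconnected w a
    rcases key w a p with h | h | h
    · exact Or.inl h
    · exact Or.inr h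
    · exact Or.inl h
  set x : V → ℤ := fun w => if G'.Reachable w b then 1 else 0 with hx
  have hxa : x a = 0 := by simp [hx, hbr]
  have hxb : x b = 1 := by
    simp only [hx]; exact if_pos (SimpleGraph.Reachable.refl b)
  have hsame : ∀ {u w : V}, G.e u w ≠ 0 → s(u, w) ≠ s(a, b) → x u = x w := by
    intro u w h hne
    have hadj' : G'.Adj u w := hG'adj h hne
    simp only [hx]
    by_cases hr : G'.Reachable w b
    · simp [hr, (hadj'.reachable.trans hr)]
    · have h2 : ¬ G'.Reachable u b := fun h2 => hr (hadj'.symm.reachable.trans h2)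
      simp [hr, h2]
  have hne : a ≠ b := hadj.ne
  have heab : (G.e a b : ℤ) = 1 := by
    have := hT.2 a b; omega
  refine ⟨x, funext fun w => ?_⟩
  rw [lapApply_eq_sum]
  by_cases hwb : w = b
  · rw [hwb]
    rw [Finset.sum_eq_single a]
    · simp [epsDiv, hne.symm, hxa, hxb, heab]
    · intro u _ hu
      by_cases h0 : G.e u b = 0
      · simp [h0]
      · have hs : s(u, b) ≠ s(a, b) := by
          intro hs
          rcases Sym2.eq_iff.mp hs with ⟨h1, h2⟩ | ⟨h1, h2⟩
          · exact hu h1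
          · rw [h1] at h0; exact h0 (G.loopless b)
        rw [hsame h0 hs]; ring
    · simp
  · by_cases hwa : w = a
    · rw [hwa]
      rw [Finset.sum_eq_single b]
      · have heba : (G.e b a : ℤ) = 1 := by rw [G.symm b a]; exact heab
        simp [epsDiv, hne, hxa, hxb, heba]
      · intro u _ hu
        by_cases h0 : G.e u a = 0
        · simp [h0]
        · have hs : s(u, a) ≠ s(a, b) := by
            intro hs
            rcases Sym2.eq_iff.mp hs with ⟨h1, h2⟩ | ⟨h1, h2⟩
            · rw [h1] at h0; exact h0 (G.loopless a)
            · exact hu h1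
          rw [hsame h0 hs]; ring
      · simp
    · have hz : ∀ u ∈ Finset.univ, (x w - x u) * (G.e u w : ℤ) = 0 := by
        intro u _
        by_cases h0 : G.e u w = 0
        · simp [h0]
        · have hs : s(u, w) ≠ s(a, b) := by
            intro hs
            rcases Sym2.eq_iff.mp hs with ⟨rfl, rfl⟩ | ⟨rfl, rfl⟩
            · exact hwb rfl
            · exact hwa rfl
          rw [hsame h0 hs]; ring
      rw [Finset.sum_eq_zero hz]
      simp [epsDiv, hwa, hwb]


lemma lapApply_add (G : Multigraph V) (x y : V → ℤ) :
    G.lapApply (x + y) = G.lapApply x + G.lapApply y := by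
  funext v
  simp only [lapApply, Pi.add_apply, add_mul, Finset.sum_add_distrib]
  ring

lemma exists_lap_eps (G : Multigraph V) (hT : G.IsTree) (r v : V) :
    ∃ x, G.lapApply x = epsDiv v - epsDiv r := by
  obtain ⟨p⟩ := hT.1.isConnected.preconnected r v
  induction p with
  | nil => exact ⟨0, by funext w; simp [lapApply, epsDiv]⟩
  | @cons u c d h q ih =>
    obtain ⟨y, hy⟩ := ih
    obtain ⟨z, hz⟩ := G.exists_lap_eps_edge hT (h : G.e u c ≠ 0)
    refine ⟨y + z, ?_⟩
    rw [G.lapApply_add, hy, hz]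
    funext w
    simp only [Pi.add_apply, Pi.sub_apply]
    ring

lemma lapApply_wsum {ι : Type*} (G : Multigraph V) (s : Finset ι) (c : ι → ℤ)
    (x : ι → V → ℤ) :
    G.lapApply (fun w => ∑ i ∈ s, c i * x i w) =
      fun w => ∑ i ∈ s, c i * G.lapApply (x i) w := by
  funext w
  simp only [lapApply, mul_sub, Finset.sum_sub_distrib]
  congr 1
  · rw [Finset.sum_mul]
    exact Finset.sum_congr rfl fun i _ => by ring
  · simp only [Finset.sum_mul, Finset.mul_sum]
    rw [Finset.sum_comm]
    exact Finset.sum_congr rfl fun i _ => Finset.sum_congr rfl fun u _ => by ring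

end Multigraph

/-- on a tree, every divisor of degree `0` is linearly
equivalent to the zero divisor; in particular it is L-effective. -/
theorem tree_deg_zero_linEquiv_zero (G : Multigraph V) (hT : G.IsTree)
    (f : V → ℤ) (hdeg : degree f = 0) :
    G.LinEquiv f 0 ∧ G.LEffective f := by
  classical
  obtain ⟨r⟩ : Nonempty V := hT.1.isConnected.nonempty
  choose x hx using fun v => exists_lap_eps G hT r v
  have key : G.lapApply (fun w => ∑ v, (-(f v)) * x v w) = fun w => -(f w) := by
    rw [G.lapApply_wsum]
    funext w
    have hxw : ∀ v, G.lapApply (x v) w = epsDiv v w - epsDiv r w :=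
      fun v => by rw [hx v]; rfl
    simp only [hxw, mul_sub, Finset.sum_sub_distrib]
    have e1 : ∑ v, (-(f v)) * epsDiv v w = -(f w) := by
      simp [epsDiv, mul_ite, Finset.sum_ite_eq]
    have e2 : ∑ v, (-(f v)) * epsDiv r w = 0 := by
      rw [← Finset.sum_mul]
      have hs : ∑ v, -(f v) = 0 := by
        rw [Finset.sum_neg_distrib]
        simpa [degree] using congrArg Neg.neg hdeg
      rw [hs, zero_mul]
    rw [e1, e2, sub_zero]
  have hle : G.LinEquiv f 0 := by
    refine ⟨fun w => ∑ v, (-(f v)) * x v w, ?_⟩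
    funext w
    have h := congrFun key w
    simp only [Pi.add_apply, h, Pi.zero_apply]
    ring
  exact ⟨hle, 0, hle, fun v => le_refl 0⟩
end

section
/- Let C_n be the cycle graph on n ≥ 3 vertices, let f be a good divisor on C_n (deg(f) = 0 and f linearly equivalent to 0), and let v and w be distinct vertices of C_n. Then the divisor f + ε_v − ε_w is bad, i.e., it has degree 0 and is not linearly equivalent to 0. -/
open Multigraph

variable {V : Type*} [Fintype V] [DecidableEq V]

lemma lap_eq (G : Multigraph V) (x : V → ℤ) (a : V) :
    G.lapApply x a = ∑ b, (x a - x b) * (G.e a b : ℤ) := by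
  unfold Multigraph.lapApply Multigraph.vdeg
  push_cast
  rw [Finset.mul_sum, ← Finset.sum_sub_distrib]
  refine Finset.sum_congr rfl fun b _ => ?_
  rw [G.symm b a]
  ring

lemma lap_sub (G : Multigraph V) (x y : V → ℤ) (u : V) :
    G.lapApply (y - x) u = G.lapApply y u - G.lapApply x u := by
  unfold Multigraph.lapApply
  simp only [Pi.sub_apply]
  have hs : ∑ b, (y b - x b) * (G.e b u : ℤ)
      = (∑ b, y b * (G.e b u : ℤ)) - ∑ b, x b * (G.e b u : ℤ) := by
    rw [← Finset.sum_sub_distrib]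
    exact Finset.sum_congr rfl fun b _ => by ring
  rw [hs]
  ring

lemma even_internal (G : Multigraph V) (S : Finset V) :
    Even (∑ a ∈ S, ∑ b ∈ S, G.e a b) := by
  classical
  induction S using Finset.induction_on with
  | empty => simp
  | @insert a S ha ih =>
    rw [Finset.sum_insert ha, Finset.sum_insert ha]
    have h1 : ∀ x ∈ S, ∑ b ∈ insert a S, G.e x b = G.e x a + ∑ b ∈ S, G.e x b :=
      fun x _ => Finset.sum_insert ha
    rw [Finset.sum_congr rfl h1, Finset.sum_add_distrib]
    have h2 : ∑ x ∈ S, G.e x a = ∑ b ∈ S, G.e a b :=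
      Finset.sum_congr rfl fun x _ => G.symm x a
    rw [G.loopless, h2]
    obtain ⟨k, hk⟩ := ih
    exact ⟨∑ b ∈ S, G.e a b + k, by omega⟩

lemma closed_eq_univ (G : Multigraph V) (hc : G.Connected) (S : Finset V)
    (hne : S.Nonempty) (hcl : ∀ a ∈ S, ∀ b, b ∉ S → G.e a b = 0) :
    S = Finset.univ := by
  obtain ⟨s, hs⟩ := hne
  have hc' : G.toSimple.Connected := hc
  have key : ∀ (a b : V), G.toSimple.Walk a b → a ∈ S → b ∈ S := by
    intro a b p
    induction p with
    | nil => exact id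
    | cons h _ ih =>
      intro ha
      apply ih
      by_contra hb
      exact h (hcl _ ha _ hb)
  apply Finset.eq_univ_of_forall
  intro t
  obtain ⟨p⟩ := hc'.preconnected s t
  exact key s t p hs

/-- on a cycle with `n ≥ 3` vertices, if `f` is good and
`v ≠ w`, then `f + ε_v − ε_w` is bad. -/
theorem good_add_eps_sub_eps_bad (G : Multigraph V)
    (hC : G.IsCycleGraph) (hcard : 3 ≤ Fintype.card V)
    (f : V → ℤ) (hf : G.Good f) (v w : V) (hvw : v ≠ w) :
    G.Bad (f + epsDiv v - epsDiv w) := by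
  obtain ⟨hdeg, y, hy⟩ := hf
  constructor
  · -- degree is zero
    unfold Multigraph.degree at hdeg ⊢
    simp only [Pi.add_apply, Pi.sub_apply]
    rw [Finset.sum_sub_distrib, Finset.sum_add_distrib, hdeg]
    simp [Multigraph.epsDiv, Finset.sum_ite_eq']
  · rintro ⟨x, hx⟩
    -- hx : 0 = (f + epsDiv v - epsDiv w) + G.lapApply x
    -- hy : 0 = f + G.lapApply y
    have h : ∀ u, G.lapApply (y - x) u = epsDiv v u - epsDiv w u := by
      intro u
      have h1 := congrFun hx u
      have h2 := congrFun hy u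
      simp only [Pi.add_apply, Pi.sub_apply, Pi.zero_apply] at h1 h2
      rw [lap_sub]
      omega
    set z := y - x with hzdef
    have hne : (Finset.univ : Finset V).Nonempty := ⟨v, Finset.mem_univ v⟩
    set M := Finset.univ.sup' hne z with hM
    set S := Finset.univ.filter (fun u => z u = M) with hS
    have hSne : S.Nonempty := by
      obtain ⟨u, -, hu⟩ := Finset.exists_mem_eq_sup' hne z
      exact ⟨u, Finset.mem_filter.mpr ⟨Finset.mem_univ u, hu.symm⟩⟩
    by_cases hSu : S = Finset.univ
    · -- z is constant, so lapApply z v = 0, contradicting h v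
      have hzc : ∀ u, z u = M := by
        intro u
        have hu : u ∈ S := by rw [hSu]; exact Finset.mem_univ u
        exact (Finset.mem_filter.mp hu).2
      have h0 : G.lapApply z v = 0 := by
        rw [lap_eq]
        refine Finset.sum_eq_zero fun b _ => ?_
        rw [hzc v, hzc b]; ring
      have h1 := h v
      rw [h0] at h1
      simp [Multigraph.epsDiv, hvw] at h1
    · -- crossing edge count
      set cN : ℕ := ∑ a ∈ S, ∑ b ∈ Sᶜ, G.e a b with hcNdef
      have hcN0 : cN ≠ 0 := by
        intro h0
        apply hSu
        apply closed_eq_univ G hC.1 S hSne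
        intro a ha b hb
        have h1 := Finset.sum_eq_zero_iff.mp h0 a ha
        exact Finset.sum_eq_zero_iff.mp h1 b (Finset.mem_compl.mpr hb)
      have hint : Even (∑ a ∈ S, ∑ b ∈ S, G.e a b) := even_internal G S
      have hdegsum : ∑ a ∈ S, G.vdeg a = (∑ a ∈ S, ∑ b ∈ S, G.e a b) + cN := by
        rw [hcNdef, ← Finset.sum_add_distrib]
        refine Finset.sum_congr rfl fun a _ => ?_
        rw [Finset.sum_add_sum_compl]
        rfl
      have hdeg2 : ∑ a ∈ S, G.vdeg a = 2 * S.card := by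
        rw [Finset.sum_congr rfl (fun a _ => hC.2 a)]
        simp [Finset.sum_const, mul_comm]
      have hcN2 : 2 ≤ cN := by
        obtain ⟨k, hk⟩ := hint
        omega
      -- now the upper bound on cN
      have hsplit : ∑ a ∈ S, G.lapApply z a
          = (∑ a ∈ S, ∑ b ∈ S, (z a - z b) * (G.e a b : ℤ))
            + ∑ a ∈ S, ∑ b ∈ Sᶜ, (z a - z b) * (G.e a b : ℤ) := by
        rw [← Finset.sum_add_distrib]
        refine Finset.sum_congr rfl fun a _ => ?_
        rw [lap_eq, ← Finset.sum_add_sum_compl S]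
      have hanti : (∑ a ∈ S, ∑ b ∈ S, (z a - z b) * (G.e a b : ℤ))
          + (∑ a ∈ S, ∑ b ∈ S, (z a - z b) * (G.e a b : ℤ)) = 0 := by
        conv_lhs => lhs; rw [Finset.sum_comm]
        rw [← Finset.sum_add_distrib]
        refine Finset.sum_eq_zero fun a _ => ?_
        rw [← Finset.sum_add_distrib]
        refine Finset.sum_eq_zero fun b _ => ?_
        rw [G.symm b a]
        ring
      have hb1 : ∀ a ∈ S, ∀ b ∈ Sᶜ, (G.e a b : ℤ) ≤ (z a - z b) * (G.e a b : ℤ) := by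
        intro a ha b hb
        have hza : z a = M := (Finset.mem_filter.mp ha).2
        have hzb : z b ≤ M := Finset.le_sup' z (Finset.mem_univ b)
        have hzb' : z b ≠ M := fun hbe =>
          (Finset.mem_compl.mp hb) (Finset.mem_filter.mpr ⟨Finset.mem_univ b, hbe⟩)
        have h1 : 1 ≤ z a - z b := by omega
        nlinarith [Int.ofNat_nonneg (G.e a b)]
      have hsum1 : (cN : ℤ) ≤ ∑ a ∈ S, G.lapApply z a := by
        rw [hsplit]
        have h0 : (∑ a ∈ S, ∑ b ∈ S, (z a - z b) * (G.e a b : ℤ)) = 0 := by linarith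
        rw [h0, zero_add, hcNdef]
        push_cast
        refine Finset.sum_le_sum fun a ha => Finset.sum_le_sum fun b hb => hb1 a ha b hb
      have hsum2 : ∑ a ∈ S, G.lapApply z a ≤ 1 := by
        have heq : ∑ a ∈ S, G.lapApply z a = ∑ a ∈ S, (epsDiv v a - epsDiv w a) :=
          Finset.sum_congr rfl fun a _ => h a
        rw [heq, Finset.sum_sub_distrib]
        simp only [Multigraph.epsDiv, Finset.sum_ite_eq']
        split_ifs <;> omega
      have : (cN : ℤ) ≤ 1 := le_trans hsum1 hsum2
      omega
end
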